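/- Let B_θ, B_z : (0,∞) → ℝ be C¹ with B_θ(r)² + B_z(r)² > 0 for all r, and let λ, α : (0,∞) → ℝ satisfy the ODE system dB_z/dr + α B_θ + λ B_z = 0 and dB_θ/dr + B_θ/r − α B_z + λ B_θ = 0. Define B = B_θ(r) e_θ + B_z(r) e_z and B_f⊥ = B_z(r) e_θ − B_θ(r) e_z on the region x²+y² > 0 of ℝ³. Then ∇×B_f⊥ = (α − 2B_θB_z/(r‖B‖²)) B_f⊥ + (−λ + (B_z² − B_θ²)/(r‖B‖²)) B, where ‖B‖² = B_θ(r)² + B_z(r)². -/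

import Mathlib

open RealInnerProductSpace

/-- The curl `∇×V = (∂₂V₃ − ∂₃V₂, ∂₃V₁ − ∂₁V₃, ∂₁V₂ − ∂₂V₁)` of a vector field on ℝ³. -/
noncomputable def curl3 (V : EuclideanSpace ℝ (Fin 3) → EuclideanSpace ℝ (Fin 3))
    (x : EuclideanSpace ℝ (Fin 3)) : EuclideanSpace ℝ (Fin 3) :=
  (EuclideanSpace.equiv (Fin 3) ℝ).symm
    ![fderiv ℝ V x (EuclideanSpace.single 1 1) 2 - fderiv ℝ V x (EuclideanSpace.single 2 1) 1,
      fderiv ℝ V x (EuclideanSpace.single 2 1) 0 - fderiv ℝ V x (EuclideanSpace.single 0 1) 2,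
      fderiv ℝ V x (EuclideanSpace.single 0 1) 1 - fderiv ℝ V x (EuclideanSpace.single 1 1) 0]

/-- The cylindrical radius `r = √(x² + y²)`. -/
noncomputable def rad (p : EuclideanSpace ℝ (Fin 3)) : ℝ := Real.sqrt (p 0 ^ 2 + p 1 ^ 2)

/-- The azimuthal unit vector `e_θ = (−y/r, x/r, 0)`. -/
noncomputable def etheta (p : EuclideanSpace ℝ (Fin 3)) : EuclideanSpace ℝ (Fin 3) :=
  (EuclideanSpace.equiv (Fin 3) ℝ).symm ![-(p 1) / rad p, p 0 / rad p, 0]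

/-- The vertical unit vector `e_z = (0,0,1)`. -/
noncomputable def ez3 : EuclideanSpace ℝ (Fin 3) := EuclideanSpace.single 2 1

set_option maxHeartbeats 2000000 in
/-- under the flux-rope ODE system (equivalent to `∇×B = λB_f⊥ + αB`),
`∇×B_f⊥ = (α − 2B_θB_z/(r‖B‖²)) B_f⊥ + (−λ + (B_z² − B_θ²)/(r‖B‖²)) B`
on the region `x² + y² > 0`, where `‖B‖² = B_θ(r)² + B_z(r)²`. -/
theorem stmt_14 (Bθ Bz Bθ' Bz' lam alp : ℝ → ℝ)
    (hBθ : ∀ r > (0:ℝ), HasDerivAt Bθ (Bθ' r) r)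
    (hBz : ∀ r > (0:ℝ), HasDerivAt Bz (Bz' r) r)
    (hpos : ∀ r > (0:ℝ), 0 < Bθ r ^ 2 + Bz r ^ 2)
    (hode1 : ∀ r > (0:ℝ), Bz' r + alp r * Bθ r + lam r * Bz r = 0)
    (hode2 : ∀ r > (0:ℝ), Bθ' r + Bθ r / r - alp r * Bz r + lam r * Bθ r = 0)
    (B Bf : EuclideanSpace ℝ (Fin 3) → EuclideanSpace ℝ (Fin 3))
    (hB : ∀ p, B p = Bθ (rad p) • etheta p + Bz (rad p) • ez3)
    (hBf : ∀ p, Bf p = Bz (rad p) • etheta p - Bθ (rad p) • ez3) :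
    ∀ p : EuclideanSpace ℝ (Fin 3), 0 < p 0 ^ 2 + p 1 ^ 2 →
      curl3 Bf p =
        (alp (rad p) - 2 * Bθ (rad p) * Bz (rad p) /
            (rad p * (Bθ (rad p) ^ 2 + Bz (rad p) ^ 2))) • Bf p
        + (-lam (rad p) + (Bz (rad p) ^ 2 - Bθ (rad p) ^ 2) /
            (rad p * (Bθ (rad p) ^ 2 + Bz (rad p) ^ 2))) • B p := by
  intro p hp
  have hrpos : 0 < rad p := Real.sqrt_pos.mpr hp
  set r := rad p with hrdef
  have hrne : r ≠ 0 := ne_of_gt hrpos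
  have hr2 : p 0 ^ 2 + p 1 ^ 2 = r ^ 2 := (Real.sq_sqrt hp.le).symm
  have hN : 0 < Bθ r ^ 2 + Bz r ^ 2 := hpos r hrpos
  have hproj : ∀ i : Fin 3, HasFDerivAt (fun q : EuclideanSpace ℝ (Fin 3) => q i)
      (EuclideanSpace.proj i : EuclideanSpace ℝ (Fin 3) →L[ℝ] ℝ) p := fun i => by
    have h := (EuclideanSpace.proj (𝕜 := ℝ) (ι := Fin 3) i).hasFDerivAt (x := p)
    exact h
  have hsq : HasFDerivAt (fun q : EuclideanSpace ℝ (Fin 3) => q 0 ^ 2 + q 1 ^ 2)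
      ((((2:ℕ):ℝ) * p 0 ^ 1) • (EuclideanSpace.proj 0 : EuclideanSpace ℝ (Fin 3) →L[ℝ] ℝ)
        + (((2:ℕ):ℝ) * p 1 ^ 1) • EuclideanSpace.proj 1) p :=
    by
    have h := ((hasDerivAt_pow 2 (p 0)).comp_hasFDerivAt p (hproj 0)).fun_add
      ((hasDerivAt_pow 2 (p 1)).comp_hasFDerivAt p (hproj 1))
    exact h
  set L : EuclideanSpace ℝ (Fin 3) →L[ℝ] ℝ :=
      (p 0 / r) • (EuclideanSpace.proj 0 : EuclideanSpace ℝ (Fin 3) →L[ℝ] ℝ)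
        + (p 1 / r) • EuclideanSpace.proj 1 with hLdef
  have hrad : HasFDerivAt rad L p := by
    have h := hsq.sqrt (ne_of_gt hp)
    have hs : Real.sqrt (p 0 ^ 2 + p 1 ^ 2) = r := rfl
    refine h.congr_fderiv ?_
    ext v
    simp [hs, hLdef, ContinuousLinearMap.smul_apply, ContinuousLinearMap.add_apply]
    field_simp
  have hradp : rad p = r := rfl
  have hBθr : HasFDerivAt (fun q => Bθ (rad q)) (Bθ' r • L) p :=
    (hBθ r hrpos).comp_hasFDerivAt p hrad
  have hBzr : HasFDerivAt (fun q => Bz (rad q)) (Bz' r • L) p :=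
    (hBz r hrpos).comp_hasFDerivAt p hrad
  have hinv : HasFDerivAt (fun q => (rad q)⁻¹) ((-(r ^ 2)⁻¹) • L) p :=
    (hasDerivAt_inv hrne).comp_hasFDerivAt p hrad
  -- component functions and their nice derivatives
  set c00 : ℝ := -(Bz' r) * (p 0 * p 1) / r ^ 2 + Bz r * (p 0 * p 1) / r ^ 3 with hc00
  set c01 : ℝ := -(Bz' r) * p 1 ^ 2 / r ^ 2 - Bz r / r + Bz r * p 1 ^ 2 / r ^ 3 with hc01
  set c10 : ℝ := Bz' r * p 0 ^ 2 / r ^ 2 + Bz r / r - Bz r * p 0 ^ 2 / r ^ 3 with hc10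
  set c11 : ℝ := Bz' r * (p 0 * p 1) / r ^ 2 - Bz r * (p 0 * p 1) / r ^ 3 with hc11
  set c20 : ℝ := -(Bθ' r) * p 0 / r with hc20
  set c21 : ℝ := -(Bθ' r) * p 1 / r with hc21
  have hg0 : HasFDerivAt (fun q : EuclideanSpace ℝ (Fin 3) => Bz (rad q) * -(q 1) * (rad q)⁻¹)
      (c00 • (EuclideanSpace.proj 0 : EuclideanSpace ℝ (Fin 3) →L[ℝ] ℝ)
        + c01 • EuclideanSpace.proj 1) p := by
    refine ((hBzr.fun_mul (hproj 1).fun_neg).fun_mul hinv).congr_fderiv ?_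
    ext v
    simp only [ContinuousLinearMap.add_apply, ContinuousLinearMap.smul_apply,
      ContinuousLinearMap.neg_apply, PiLp.proj_apply, smul_eq_mul, hradp]
    rw [hLdef, hc00, hc01]
    simp only [ContinuousLinearMap.add_apply, ContinuousLinearMap.smul_apply, PiLp.proj_apply, smul_eq_mul]
    field_simp
    ring
  have hg1 : HasFDerivAt (fun q : EuclideanSpace ℝ (Fin 3) => Bz (rad q) * q 0 * (rad q)⁻¹)
      (c10 • (EuclideanSpace.proj 0 : EuclideanSpace ℝ (Fin 3) →L[ℝ] ℝ)
        + c11 • EuclideanSpace.proj 1) p := by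
    refine ((hBzr.fun_mul (hproj 0)).fun_mul hinv).congr_fderiv ?_
    ext v
    simp only [ContinuousLinearMap.add_apply, ContinuousLinearMap.smul_apply,
      ContinuousLinearMap.neg_apply, PiLp.proj_apply, smul_eq_mul, hradp]
    rw [hLdef, hc10, hc11]
    simp only [ContinuousLinearMap.add_apply, ContinuousLinearMap.smul_apply, PiLp.proj_apply, smul_eq_mul]
    field_simp
    ring
  have hg2 : HasFDerivAt (fun q : EuclideanSpace ℝ (Fin 3) => -(Bθ (rad q)))
      (c20 • (EuclideanSpace.proj 0 : EuclideanSpace ℝ (Fin 3) →L[ℝ] ℝ)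
        + c21 • EuclideanSpace.proj 1) p := by
    refine hBθr.neg.congr_fderiv ?_
    ext v
    simp [hLdef, hc20, hc21, ContinuousLinearMap.smul_apply, ContinuousLinearMap.add_apply]
    ring
  have hBff : Bf = fun q => (EuclideanSpace.equiv (Fin 3) ℝ).symm
      ![Bz (rad q) * -(q 1) * (rad q)⁻¹, Bz (rad q) * q 0 * (rad q)⁻¹, -(Bθ (rad q))] := by
    funext q
    rw [hBf q]
    ext i
    fin_cases i <;>
      simp [etheta, ez3, EuclideanSpace.single_apply, div_eq_mul_inv] <;> ring
  have hpi : HasFDerivAt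
      (fun q : EuclideanSpace ℝ (Fin 3) =>
        ![Bz (rad q) * -(q 1) * (rad q)⁻¹, Bz (rad q) * q 0 * (rad q)⁻¹, -(Bθ (rad q))])
      (ContinuousLinearMap.pi
        ![c00 • (EuclideanSpace.proj 0 : EuclideanSpace ℝ (Fin 3) →L[ℝ] ℝ) + c01 • EuclideanSpace.proj 1,
          c10 • (EuclideanSpace.proj 0 : EuclideanSpace ℝ (Fin 3) →L[ℝ] ℝ) + c11 • EuclideanSpace.proj 1,
          c20 • (EuclideanSpace.proj 0 : EuclideanSpace ℝ (Fin 3) →L[ℝ] ℝ) + c21 • EuclideanSpace.proj 1]) p := by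
    refine hasFDerivAt_pi'.mpr ?_
    intro i
    fin_cases i <;>
      simp only [ContinuousLinearMap.proj_pi, Matrix.cons_val_zero, Matrix.cons_val_one,
        Matrix.head_cons, Fin.mk_zero, Fin.mk_one, Matrix.cons_val_two, Matrix.tail_cons]
    exacts [hg0, hg1, hg2]
  have hBfD : HasFDerivAt Bf
      ((↑(EuclideanSpace.equiv (Fin 3) ℝ).symm : (Fin 3 → ℝ) →L[ℝ] EuclideanSpace ℝ (Fin 3)).comp
        (ContinuousLinearMap.pi
        ![c00 • (EuclideanSpace.proj 0 : EuclideanSpace ℝ (Fin 3) →L[ℝ] ℝ) + c01 • EuclideanSpace.proj 1,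
          c10 • (EuclideanSpace.proj 0 : EuclideanSpace ℝ (Fin 3) →L[ℝ] ℝ) + c11 • EuclideanSpace.proj 1,
          c20 • (EuclideanSpace.proj 0 : EuclideanSpace ℝ (Fin 3) →L[ℝ] ℝ) + c21 • EuclideanSpace.proj 1])) p := by
    rw [hBff]
    exact (ContinuousLinearEquiv.comp_hasFDerivAt_iff _).mpr hpi
  have hfd := hBfD.fderiv
  have hBz'v : Bz' r = -(alp r * Bθ r) - lam r * Bz r := by
    have h := hode1 r hrpos; linarith
  have hBθ'v : Bθ' r = alp r * Bz r - lam r * Bθ r - Bθ r / r := by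
    have h := hode2 r hrpos; linarith
  have hy2 : p 1 ^ 2 = r ^ 2 - p 0 ^ 2 := by linarith
  rw [hBf p, hB p]
  simp only [curl3, hfd]
  ext i
  fin_cases i <;>
    simp [etheta, ez3, EuclideanSpace.single_apply, ContinuousLinearMap.comp_apply,
      ContinuousLinearMap.pi_apply, ContinuousLinearMap.add_apply, ContinuousLinearMap.smul_apply,
      PiLp.proj_apply, smul_eq_mul, hradp]
  · rw [hc21, hBθ'v]
    field_simp
    ring
  · rw [hc20, hBθ'v]
    field_simp
    ring
  · rw [hc10, hc01, hBz'v, hy2]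
    field_simp
    ring
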